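/- Let g be a Lorentzian 3×3 real symmetric matrix, g8 a positive-definite 8×8 real symmetric matrix, c ∈ ℝ, and set V² := c²/|g|. If V² < 1, then M_C(g, g8, c) = M_Ω(ḡ, ḡ8, ω), where ḡ := (1−V²)^(2/3)·g, ḡ8 := (1−V²)^(−1/3)·g8 and ω := c/(det g·(1−V²)). Thus when V² < 1 the 3-form can be traded for a trivector. -/

import Mathlib

open Matrix

/-- The (g,C)-frame generalised metric: a 14×14 matrix in 3+3+8 block form. -/
noncomputable def MC (g : Matrix (Fin 3) (Fin 3) ℝ) (g8 : Matrix (Fin 8) (Fin 8) ℝ) (c : ℝ) :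
    Matrix ((Fin 3 ⊕ Fin 3) ⊕ Fin 8) ((Fin 3 ⊕ Fin 3) ⊕ Fin 8) ℝ :=
  |g.det * g8.det| ^ (-(1 : ℝ) / 2) •
    fromBlocks
      (fromBlocks ((1 + c ^ 2 / g.det) • g) ((c / g.det) • g) ((c / g.det) • g)
        ((1 / g.det) • g))
      0 0 g8

/-- The (ḡ,Ω)-frame generalised metric: a 14×14 matrix in 3+3+8 block form. -/
noncomputable def MOmega (g : Matrix (Fin 3) (Fin 3) ℝ) (g8 : Matrix (Fin 8) (Fin 8) ℝ)
    (ω : ℝ) : Matrix ((Fin 3 ⊕ Fin 3) ⊕ Fin 8) ((Fin 3 ⊕ Fin 3) ⊕ Fin 8) ℝ :=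
  |g.det * g8.det| ^ (-(1 : ℝ) / 2) •
    fromBlocks
      (fromBlocks g (ω • g) (ω • g) ((ω ^ 2 + 1 / g.det) • g))
      0 0 g8

/-- A 3×3 real symmetric (Hermitian) matrix is Lorentzian if it has exactly one negative
and two positive eigenvalues. -/
def Lorentzian3 (g : Matrix (Fin 3) (Fin 3) ℝ) : Prop :=
  ∃ hg : g.IsHermitian,
    {i | hg.eigenvalues i < 0}.ncard = 1 ∧ {i | 0 < hg.eigenvalues i}.ncard = 2

lemma det_smul8' (g8 : Matrix (Fin 8) (Fin 8) ℝ) (b : ℝ) : (b • g8).det = b ^ 8 * g8.det := by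
  rw [det_smul_of_tower, Fintype.card_fin, smul_eq_mul]

lemma det_smul3' (g : Matrix (Fin 3) (Fin 3) ℝ) (b : ℝ) : (b • g).det = b ^ 3 * g.det := by
  rw [det_smul_of_tower, Fintype.card_fin, smul_eq_mul]

lemma lorentzian_det_neg {g : Matrix (Fin 3) (Fin 3) ℝ} (hg : Lorentzian3 g) : g.det < 0 := by
  obtain ⟨hH, h1, h2⟩ := hg
  obtain ⟨a, ha⟩ := Set.ncard_eq_one.mp h1
  obtain ⟨b, b', hbb, hset⟩ := Set.ncard_eq_two.mp h2
  have hea : hH.eigenvalues a < 0 := by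
    have : a ∈ {i | hH.eigenvalues i < 0} := by rw [ha]; rfl
    exact this
  have heb : 0 < hH.eigenvalues b := by
    have : b ∈ {i | 0 < hH.eigenvalues i} := by rw [hset]; simp
    exact this
  have heb' : 0 < hH.eigenvalues b' := by
    have : b' ∈ {i | 0 < hH.eigenvalues i} := by rw [hset]; simp
    exact this
  have hab : a ≠ b := fun h => by subst h; linarith
  have hab' : a ≠ b' := fun h => by subst h; linarith
  have huniv : ({a, b, b'} : Finset (Fin 3)) = Finset.univ := by
    apply Finset.eq_univ_of_card
    rw [Finset.card_insert_of_notMem (by simp [hab, hab']),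
      Finset.card_insert_of_notMem (by simp [hbb]), Finset.card_singleton]
    simp
  have hdet : g.det = ∏ i, hH.eigenvalues i := by
    simpa using hH.det_eq_prod_eigenvalues
  rw [hdet, ← huniv, Finset.prod_insert (by simp [hab, hab']),
    Finset.prod_insert (by simp [hbb]), Finset.prod_singleton]
  exact mul_neg_of_neg_of_pos hea (mul_pos heb heb')

/-- For Lorentzian g, positive-definite g8, and V² := c²/|g| < 1 (where |g| = −det g),
the (g,C)-frame generalised metric equals the (ḡ,Ω)-frame one with
ḡ = (1−V²)^(2/3)·g, ḡ8 = (1−V²)^(−1/3)·g8 and ω = c/(det g·(1−V²)). -/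
theorem stmt_3 (g : Matrix (Fin 3) (Fin 3) ℝ) (g8 : Matrix (Fin 8) (Fin 8) ℝ)
    (hg : Lorentzian3 g) (hg8 : g8.PosDef) (c : ℝ)
    (hV : c ^ 2 / (-g.det) < 1) :
    MC g g8 c =
      MOmega ((1 - c ^ 2 / (-g.det)) ^ ((2 : ℝ) / 3) • g)
        ((1 - c ^ 2 / (-g.det)) ^ (-(1 : ℝ) / 3) • g8)
        (c / (g.det * (1 - c ^ 2 / (-g.det)))) := by
  have hdet : g.det < 0 := lorentzian_det_neg hg
  have hdne : g.det ≠ 0 := ne_of_lt hdet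
  set s : ℝ := 1 - c ^ 2 / (-g.det) with hs_def
  have hs : 0 < s := by
    have : 0 ≤ c ^ 2 / (-g.det) := div_nonneg (sq_nonneg c) (by linarith)
    simp only [hs_def]; linarith
  have hsne : s ≠ 0 := ne_of_gt hs
  have hc2 : c ^ 2 = (1 - s) * (-g.det) := by
    rw [hs_def]; field_simp; ring
  clear_value s
  have hP3 : ((s ^ ((2:ℝ)/3)) ^ (3:ℕ) : ℝ) = s ^ ((2:ℝ)) := by
    rw [← Real.rpow_natCast (s ^ ((2:ℝ)/3)) 3, ← Real.rpow_mul hs.le]; norm_num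
  have hP8 : ((s ^ (-(1:ℝ)/3)) ^ (8:ℕ) : ℝ) = s ^ (-(8:ℝ)/3) := by
    rw [← Real.rpow_natCast (s ^ (-(1:ℝ)/3)) 8, ← Real.rpow_mul hs.le]; norm_num
  unfold MC MOmega
  rw [det_smul3', det_smul8', hP3, hP8]
  have hQ : |s ^ ((2:ℝ)) * g.det * (s ^ (-(8:ℝ)/3) * g8.det)| ^ (-(1:ℝ)/2)
      = s ^ ((1:ℝ)/3) * |g.det * g8.det| ^ (-(1:ℝ)/2) := by
    have h1 : s ^ ((2:ℝ)) * g.det * (s ^ (-(8:ℝ)/3) * g8.det)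
        = (s ^ (-(2:ℝ)/3)) * (g.det * g8.det) := by
      rw [show (s ^ (-(2:ℝ)/3)) = s ^ ((2:ℝ)) * s ^ (-(8:ℝ)/3) from by
        rw [← Real.rpow_add hs]; norm_num]
      ring
    rw [h1, abs_mul, abs_of_pos (Real.rpow_pos_of_pos hs _),
      Real.mul_rpow (Real.rpow_pos_of_pos hs _).le (abs_nonneg _),
      ← Real.rpow_mul hs.le]
    norm_num
  rw [hQ, mul_smul, smul_comm]
  congr 1
  rw [fromBlocks_smul, fromBlocks_smul]
  have hs13 : s ^ ((1:ℝ)/3) * s ^ ((2:ℝ)/3) = s := by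
    rw [← Real.rpow_add hs]; norm_num
  have hs11 : s ^ ((1:ℝ)/3) * s ^ (-(1:ℝ)/3) = 1 := by
    rw [← Real.rpow_add hs]; norm_num
  refine fromBlocks_inj.mpr ⟨fromBlocks_inj.mpr ⟨?_, ?_, ?_, ?_⟩, by simp, by simp, ?_⟩
  · rw [smul_smul, hs13]
    congr 1
    field_simp
    linarith [hc2]
  · rw [smul_smul, smul_smul]
    congr 1
    rw [mul_right_comm, hs13]
    field_simp
  · rw [smul_smul, smul_smul]
    congr 1
    rw [mul_right_comm, hs13]
    field_simp
  · rw [smul_smul, smul_smul]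
    congr 1
    rw [mul_right_comm, hs13]
    field_simp
    simp only [Real.rpow_two] at *
    linear_combination (-(s ^ 2)) * hc2
  · rw [smul_smul, hs11, one_smul]
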